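/- Assume Δt ≤ 1/2. For each layer n, the one-step GraphCON-GCN map Φⁿ : ℝ^{2v} → ℝ^{2v} sending Zⁿ⁻¹ = (Xⁿ⁻¹₁, Yⁿ⁻¹₁, …, Xⁿ⁻¹_v, Yⁿ⁻¹_v) to Zⁿ = (Xⁿ₁, Yⁿ₁, …, Xⁿ_v, Yⁿ_v) is differentiable, and at every point z ∈ ℝ^{2v} its Jacobian matrix satisfies ‖DΦⁿ(z)‖_∞ ≤ 1 + Γ Δt / 2, where ‖·‖_∞ is the matrix ∞-norm (maximum absolute row sum). -/

import Mathlib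

/-- One step of the GraphCON-GCN recursion, mapping the state
`Z = (X, Y) ∈ ℝ^v × ℝ^v` to the new state, for weight vector `wn`:
`C_i = (wn_i/d_i) X_i + ∑_{j∈N_i} wn_j X_j / √(d_i d_j)`,
`Y'_i = (1 − Δt) Y_i + Δt σ(C_i) − Δt X_i`, `X'_i = X_i + Δt Y'_i`. -/
noncomputable def gcnStep {v : ℕ} (G : SimpleGraph (Fin v)) [DecidableRel G.Adj]
    (d : Fin v → ℝ) (σ : ℝ → ℝ) (Δt : ℝ) (wn : Fin v → ℝ)
    (p : (Fin v → ℝ) × (Fin v → ℝ)) : (Fin v → ℝ) × (Fin v → ℝ) :=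
  let C : Fin v → ℝ := fun i =>
    wn i / d i * p.1 i + ∑ j ∈ G.neighborFinset i, wn j * p.1 j / Real.sqrt (d i * d j)
  let Ynew : Fin v → ℝ := fun i => (1 - Δt) * p.2 i + Δt * σ (C i) - Δt * p.1 i
  (fun i => p.1 i + Δt * Ynew i, Ynew)

/-- **Jacobian bound for the one-step GraphCON-GCN map.** Assuming `Δt ≤ 1/2`, the
one-step map `Φⁿ : ℝ^{2v} → ℝ^{2v}` is differentiable and at every point its Jacobian
(as an operator with respect to the sup-norm, i.e. in the matrix ∞-norm) satisfies
`‖DΦⁿ(z)‖_∞ ≤ 1 + Γ Δt / 2`, where `D̂ = max_{i,j} 1/√(d_i d_j)` and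
`Γ = 6 + 4 β' D̂ max_{1≤n≤N} ‖wⁿ‖₁`. -/
theorem stmt_14 {v N : ℕ} (hv : 0 < v) (G : SimpleGraph (Fin v)) [DecidableRel G.Adj]
    (d : Fin v → ℝ) (hd : ∀ i : Fin v, 1 ≤ d i)
    (Δt : ℝ) (hΔt : 0 < Δt) (hΔt2 : Δt ≤ 1 / 2)
    (σ : ℝ → ℝ) (hσdiff : Differentiable ℝ σ)
    (β β' : ℝ) (hβ : ∀ x : ℝ, |σ x| ≤ β) (hβ' : ∀ x : ℝ, |deriv σ x| ≤ β')
    (w : Fin N → Fin v → ℝ) (n : Fin N)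
    (Dhat Γ : ℝ)
    (hDhat : Dhat = ⨆ i : Fin v, ⨆ j : Fin v, 1 / Real.sqrt (d i * d j))
    (hΓ : Γ = 6 + 4 * β' * Dhat * ⨆ k : Fin N, ∑ i : Fin v, |w k i|) :
    ∀ z : (Fin v → ℝ) × (Fin v → ℝ),
      ∃ L : ((Fin v → ℝ) × (Fin v → ℝ)) →L[ℝ] ((Fin v → ℝ) × (Fin v → ℝ)),
        HasFDerivAt (gcnStep G d σ Δt (w n)) L z ∧ ‖L‖ ≤ 1 + Γ * Δt / 2 := by
  intro z
  set W : ℝ := ⨆ k : Fin N, ∑ i : Fin v, |w k i| with hW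
  -- basic positivity facts
  have hd0 : ∀ i, (0:ℝ) < d i := fun i => lt_of_lt_of_le one_pos (hd i)
  have hsqrt_pos : ∀ i j, (0:ℝ) < Real.sqrt (d i * d j) := fun i j =>
    Real.sqrt_pos.2 (mul_pos (hd0 i) (hd0 j))
  have hD : ∀ i j : Fin v, 1 / Real.sqrt (d i * d j) ≤ Dhat := by
    intro i j
    rw [hDhat]
    have h1 : (1:ℝ) / Real.sqrt (d i * d j) ≤ ⨆ j' : Fin v, 1 / Real.sqrt (d i * d j') :=
      le_ciSup (f := fun j' : Fin v => 1 / Real.sqrt (d i * d j'))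
        (Set.Finite.bddAbove (Set.finite_range _)) j
    exact h1.trans (le_ciSup (f := fun i' : Fin v => ⨆ j' : Fin v, 1 / Real.sqrt (d i' * d j'))
      (Set.Finite.bddAbove (Set.finite_range _)) i)
  have hD0 : 0 ≤ Dhat := by
    obtain ⟨i⟩ : Nonempty (Fin v) := ⟨⟨0, hv⟩⟩
    exact le_trans (by positivity) (hD i i)
  have hWn : ∑ i : Fin v, |w n i| ≤ W :=
    le_ciSup (f := fun k : Fin N => ∑ i : Fin v, |w k i|)
      (Set.Finite.bddAbove (Set.finite_range _)) n
  have hW0 : 0 ≤ W := le_trans (Finset.sum_nonneg fun i _ => abs_nonneg _) hWn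
  have hβ'0 : 0 ≤ β' := le_trans (abs_nonneg _) (hβ' 0)
  -- arithmetic facts, proved early while the context is small
  set K : ℝ := β' * Dhat * W with hK
  have hK0 : 0 ≤ K := by positivity
  have hGK : Γ = 6 + 4 * K := by rw [hΓ, hK]; ring
  have hM0 : (0:ℝ) ≤ 1 + Γ * Δt / 2 := by
    rw [hGK]; nlinarith [mul_nonneg hΔt.le hK0]
  have hMYc : 1 + Δt * K ≤ 1 + Γ * Δt / 2 := by
    rw [hGK]; nlinarith [mul_nonneg hΔt.le hK0]
  have hMXc : 1 + Δt * (1 + Δt * K) ≤ 1 + Γ * Δt / 2 := by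
    rw [hGK]
    nlinarith [mul_nonneg hΔt.le hK0, mul_nonneg (mul_nonneg hΔt.le hΔt.le) hK0,
      mul_le_mul_of_nonneg_right (mul_le_mul_of_nonneg_left hΔt2 hΔt.le) hK0]
  -- projection maps
  set e1 : Fin v → ((Fin v → ℝ) × (Fin v → ℝ) →L[ℝ] ℝ) := fun i =>
    (ContinuousLinearMap.proj i).comp (ContinuousLinearMap.fst ℝ (Fin v → ℝ) (Fin v → ℝ)) with he1def
  set e2 : Fin v → ((Fin v → ℝ) × (Fin v → ℝ) →L[ℝ] ℝ) := fun i =>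
    (ContinuousLinearMap.proj i).comp (ContinuousLinearMap.snd ℝ (Fin v → ℝ) (Fin v → ℝ)) with he2def
  -- pointwise evaluations
  have he1app : ∀ i (p : (Fin v → ℝ) × (Fin v → ℝ)), e1 i p = p.1 i := fun i p => rfl
  have he2app : ∀ i (p : (Fin v → ℝ) × (Fin v → ℝ)), e2 i p = p.2 i := fun i p => rfl
  -- the C functions and their derivatives
  set Cf : (Fin v → ℝ) × (Fin v → ℝ) → Fin v → ℝ := fun p i =>
    w n i / d i * p.1 i + ∑ j ∈ G.neighborFinset i, w n j * p.1 j / Real.sqrt (d i * d j) with hCf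
  set LC : Fin v → ((Fin v → ℝ) × (Fin v → ℝ) →L[ℝ] ℝ) := fun i =>
    (w n i / d i) • e1 i + ∑ j ∈ G.neighborFinset i, (w n j / Real.sqrt (d i * d j)) • e1 j
    with hLC
  have hLCapp : ∀ i (p : (Fin v → ℝ) × (Fin v → ℝ)), LC i p =
      w n i / d i * p.1 i + ∑ j ∈ G.neighborFinset i, w n j / Real.sqrt (d i * d j) * p.1 j := by
    intro i p
    simp [hLC, ContinuousLinearMap.sum_apply, he1app, smul_eq_mul]
  have hCderiv : ∀ i, HasFDerivAt (fun p => Cf p i) (LC i) z := by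
    intro i
    have : (fun p => Cf p i) = ⇑(LC i) := by
      funext p
      rw [hLCapp]
      simp only [hCf]
      congr 1
      exact Finset.sum_congr rfl fun j _ => by ring
    rw [this]
    exact (LC i).hasFDerivAt
  -- Y-component derivatives
  set LY : Fin v → ((Fin v → ℝ) × (Fin v → ℝ) →L[ℝ] ℝ) := fun i =>
    ((1 - Δt) • e2 i + Δt • (deriv σ (Cf z i) • LC i)) - Δt • e1 i with hLYdef
  set Yf : (Fin v → ℝ) × (Fin v → ℝ) → Fin v → ℝ := fun p i => (1 - Δt) * p.2 i + Δt * σ (Cf p i) - Δt * p.1 i with hYf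
  have hYderiv : ∀ i, HasFDerivAt (fun p => Yf p i) (LY i) z := by
    intro i
    have hσC : HasFDerivAt (fun p => σ (Cf p i)) (deriv σ (Cf z i) • LC i) z :=
      (hσdiff (Cf z i)).hasDerivAt.comp_hasFDerivAt z (hCderiv i)
    exact (((e2 i).hasFDerivAt.const_mul (1 - Δt)).add (hσC.const_mul Δt)).sub
      ((e1 i).hasFDerivAt.const_mul Δt)
  -- X-component derivatives
  set LX : Fin v → ((Fin v → ℝ) × (Fin v → ℝ) →L[ℝ] ℝ) := fun i => e1 i + Δt • LY i with hLXdef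
  have hXderiv : ∀ i, HasFDerivAt (fun p => p.1 i + Δt * Yf p i) (LX i) z := by
    intro i
    exact (e1 i).hasFDerivAt.add ((hYderiv i).const_mul Δt)
  -- assemble
  set L : (Fin v → ℝ) × (Fin v → ℝ) →L[ℝ] (Fin v → ℝ) × (Fin v → ℝ) := (ContinuousLinearMap.pi LX).prod (ContinuousLinearMap.pi LY) with hLdef
  refine ⟨L, ?_, ?_⟩
  · have hF : gcnStep G d σ Δt (w n) =
        fun p : (Fin v → ℝ) × (Fin v → ℝ) => ((fun i => p.1 i + Δt * Yf p i), fun i => Yf p i) := rfl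
    rw [hLdef, hF]
    exact HasFDerivAt.prodMk (hasFDerivAt_pi.2 hXderiv) (hasFDerivAt_pi.2 hYderiv)
  · -- norm bound
    refine L.opNorm_le_bound hM0 ?_
    intro p
    -- bound on |LC i p|
    have hp1 : ∀ i, |p.1 i| ≤ ‖p‖ := fun i =>
      le_trans (norm_le_pi_norm p.1 i) (norm_fst_le p)
    have hp2 : ∀ i, |p.2 i| ≤ ‖p‖ := fun i =>
      le_trans (norm_le_pi_norm p.2 i) (norm_snd_le p)
    have hp0 : 0 ≤ ‖p‖ := norm_nonneg p
    have hCb : ∀ i, |LC i p| ≤ W * Dhat * ‖p‖ := by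
      intro i
      rw [hLCapp]
      have hterm : ∀ j : Fin v, |w n j / Real.sqrt (d i * d j) * p.1 j| ≤ |w n j| * (Dhat * ‖p‖) := by
        intro j
        rw [abs_mul, abs_div, abs_of_pos (hsqrt_pos i j)]
        calc |w n j| / Real.sqrt (d i * d j) * |p.1 j|
            ≤ (|w n j| * Dhat) * ‖p‖ := by
              rw [div_eq_mul_one_div]
              exact mul_le_mul (mul_le_mul_of_nonneg_left (hD i j) (abs_nonneg _))
                (hp1 j) (abs_nonneg _) (by positivity)
          _ = |w n j| * (Dhat * ‖p‖) := by ring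
      have h1 : |w n i / d i * p.1 i| ≤ |w n i| * (Dhat * ‖p‖) := by
        have hdi : |w n i / d i * p.1 i| = |w n i| * (1 / d i) * |p.1 i| := by
          rw [abs_mul, abs_div, abs_of_pos (hd0 i)]; ring
        rw [hdi]
        have hdD : 1 / d i ≤ Dhat := by
          have := hD i i
          rwa [Real.sqrt_mul_self (hd0 i).le] at this
        calc |w n i| * (1 / d i) * |p.1 i| ≤ |w n i| * Dhat * ‖p‖ :=
              mul_le_mul (mul_le_mul_of_nonneg_left hdD (abs_nonneg _)) (hp1 i)
                (abs_nonneg _) (by positivity)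
          _ = |w n i| * (Dhat * ‖p‖) := by ring
      have hsub : G.neighborFinset i ⊆ Finset.univ.erase i := by
        intro j hj
        simp only [SimpleGraph.mem_neighborFinset] at hj
        exact Finset.mem_erase.2 ⟨hj.ne', Finset.mem_univ j⟩
      calc |w n i / d i * p.1 i + ∑ j ∈ G.neighborFinset i, w n j / Real.sqrt (d i * d j) * p.1 j|
          ≤ |w n i / d i * p.1 i| + |∑ j ∈ G.neighborFinset i, w n j / Real.sqrt (d i * d j) * p.1 j| :=
            abs_add_le _ _
        _ ≤ |w n i| * (Dhat * ‖p‖) + ∑ j ∈ G.neighborFinset i, |w n j / Real.sqrt (d i * d j) * p.1 j| :=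
            add_le_add h1 (Finset.abs_sum_le_sum_abs _ _)
        _ ≤ |w n i| * (Dhat * ‖p‖) + ∑ j ∈ Finset.univ.erase i, |w n j| * (Dhat * ‖p‖) := by
            refine add_le_add le_rfl ?_
            refine le_trans (Finset.sum_le_sum fun j _ => hterm j) ?_
            exact Finset.sum_le_sum_of_subset_of_nonneg hsub fun j _ _ => by positivity
        _ = ∑ j : Fin v, |w n j| * (Dhat * ‖p‖) :=
            Finset.add_sum_erase Finset.univ (fun j => |w n j| * (Dhat * ‖p‖)) (Finset.mem_univ i)
        _ = (∑ j : Fin v, |w n j|) * (Dhat * ‖p‖) := by rw [Finset.sum_mul]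
        _ ≤ W * (Dhat * ‖p‖) := mul_le_mul_of_nonneg_right hWn (by positivity)
        _ = W * Dhat * ‖p‖ := by ring
    -- bound on |LY i p|
    have hYb : ∀ i, |LY i p| ≤ (1 + Δt * K) * ‖p‖ := by
      intro i
      have happ : LY i p = (1 - Δt) * p.2 i + Δt * (deriv σ (Cf z i) * LC i p) - Δt * p.1 i := by
        simp [hLYdef, he1app, he2app, smul_eq_mul]
      rw [happ]
      have hmid : |Δt * (deriv σ (Cf z i) * LC i p)| ≤ Δt * (β' * (W * Dhat * ‖p‖)) := by
        rw [abs_mul, abs_mul, abs_of_pos hΔt]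
        refine mul_le_mul_of_nonneg_left ?_ hΔt.le
        exact mul_le_mul (hβ' _) (hCb i) (abs_nonneg _) hβ'0
      have h1 : |(1 - Δt) * p.2 i| ≤ (1 - Δt) * ‖p‖ := by
        rw [abs_mul, abs_of_nonneg (by linarith : (0:ℝ) ≤ 1 - Δt)]
        exact mul_le_mul_of_nonneg_left (hp2 i) (by linarith)
      have h3 : |Δt * p.1 i| ≤ Δt * ‖p‖ := by
        rw [abs_mul, abs_of_pos hΔt]
        exact mul_le_mul_of_nonneg_left (hp1 i) hΔt.le
      calc |(1 - Δt) * p.2 i + Δt * (deriv σ (Cf z i) * LC i p) - Δt * p.1 i|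
          ≤ |(1 - Δt) * p.2 i + Δt * (deriv σ (Cf z i) * LC i p)| + |Δt * p.1 i| := abs_sub _ _
        _ ≤ (|(1 - Δt) * p.2 i| + |Δt * (deriv σ (Cf z i) * LC i p)|) + |Δt * p.1 i| :=
            add_le_add (abs_add_le _ _) le_rfl
        _ ≤ ((1 - Δt) * ‖p‖ + Δt * (β' * (W * Dhat * ‖p‖))) + Δt * ‖p‖ :=
            add_le_add (add_le_add h1 hmid) h3
        _ = (1 + Δt * K) * ‖p‖ := by rw [hK]; ring
    -- bound on |LX i p|
    have hXb : ∀ i, |LX i p| ≤ (1 + Δt * (1 + Δt * K)) * ‖p‖ := by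
      intro i
      have happ : LX i p = p.1 i + Δt * LY i p := by
        simp [hLXdef, he1app, smul_eq_mul]
      rw [happ]
      calc |p.1 i + Δt * LY i p| ≤ |p.1 i| + |Δt * LY i p| := abs_add_le _ _
        _ ≤ ‖p‖ + Δt * ((1 + Δt * K) * ‖p‖) := by
            refine add_le_add (hp1 i) ?_
            rw [abs_mul, abs_of_pos hΔt]
            exact mul_le_mul_of_nonneg_left (hYb i) hΔt.le
        _ = (1 + Δt * (1 + Δt * K)) * ‖p‖ := by ring
    -- combine
    have hMY : (1 + Δt * K) * ‖p‖ ≤ (1 + Γ * Δt / 2) * ‖p‖ :=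
      mul_le_mul_of_nonneg_right hMYc hp0
    have hMX : (1 + Δt * (1 + Δt * K)) * ‖p‖ ≤ (1 + Γ * Δt / 2) * ‖p‖ :=
      mul_le_mul_of_nonneg_right hMXc hp0
    have hLp : L p = (fun i => LX i p, fun i => LY i p) := rfl
    rw [hLp, Prod.norm_def]
    refine max_le ?_ ?_
    · refine (pi_norm_le_iff_of_nonneg (by positivity)).2 fun i => ?_
      exact le_trans (hXb i) hMX
    · refine (pi_norm_le_iff_of_nonneg (by positivity)).2 fun i => ?_
      exact le_trans (hYb i) hMY
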